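/- arXiv:2204.03987 — 2 statements merged into one kernel-verified Lean document; each statement's English description precedes it below -/
import Mathlib

section
/- Let $F$ be a finite field with $q \equiv 3 \pmod 4$, $(W,\langle,\rangle)$ a symplectic space over $F$, and $\tau : F^\times \to F^\times$ the homomorphism that is trivial on $\{\pm 1\}$ and sends each square $a^2$ (for $a$ in the odd-order part) to an inverse square root. Let $\chi_q^+$ be the quadratic (Legendre) character of $F^\times$. Then the map $\alpha : H(W) \times \mathrm{GSp}(W) \to H(W)$, $((v,t), g) \mapsto (\tau(\lambda_g) v g, \chi_q^+(\lambda_g) t)$, defines a right action of $\mathrm{GSp}(W)$ on the Heisenberg group $H(W)$ by group automorphisms, where $\lambda_g$ is the similitude factor of $g$. -/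
/-- Let `F` be a finite field with `q ≡ 3 (mod 4)`, `(W, ω)` a symplectic
`F`-space, `τ : Fˣ → Fˣ` the homomorphism trivial on `{±1}` with `τ(a)² a = 1` on
squares, and `χ` the Legendre character.  Then
`α : ((v,t), g) ↦ (τ(λ_g) • (v g), χ(λ_g) t)` is a right action of `GSp(W)` on the
Heisenberg group `H(W)` by group automorphisms. -/
theorem stmt6 (F : Type*) [Field F] [Fintype F]
    (hq3 : Fintype.card F % 4 = 3)
    (W : Type*) [AddCommGroup W] [Module F W]
    (ω : W →ₗ[F] W →ₗ[F] F) (halt : ∀ w : W, ω w w = 0)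
    (τ : Fˣ →* Fˣ) (hτ1 : τ (-1) = 1)
    (hτsq : ∀ a : Fˣ, IsSquare a → (τ a) ^ 2 * a = 1)
    (χ : Fˣ →* Fˣ) (hχsq : ∀ x : Fˣ, IsSquare x → χ x = 1)
    (hχns : ∀ x : Fˣ, ¬ IsSquare x → χ x = -1)
    (mul : W × F → W × F → W × F)
    (hmul : ∀ p q : W × F,
      mul p q = (p.1 + q.1, p.2 + q.2 + (2 : F)⁻¹ * ω p.1 q.1))
    (A : (W ≃ₗ[F] W) → Fˣ → (W × F) → (W × F))
    (hA : ∀ (g : W ≃ₗ[F] W) (lam : Fˣ) (p : W × F),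
      A g lam p = (((τ lam : Fˣ) : F) • g p.1, ((χ lam : Fˣ) : F) * p.2)) :
    ∀ (g g' : W ≃ₗ[F] W) (lam lam' : Fˣ),
      (∀ v w : W, ω (g v) (g w) = (lam : F) * ω v w) →
      (∀ v w : W, ω (g' v) (g' w) = (lam' : F) * ω v w) →
      -- each α(g) is an automorphism of H(W)
      (∀ p q : W × F, A g lam (mul p q) = mul (A g lam p) (A g lam q)) ∧
      Function.Bijective (A g lam) ∧
      -- right-action axioms
      (∀ p : W × F, A (g.trans g') (lam * lam') p = A g' lam' (A g lam p)) ∧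
      (∀ p : W × F, A (LinearEquiv.refl F W) 1 p = p) := by
  have hchar : ringChar F ≠ 2 := by
    intro h
    have := (FiniteField.even_card_iff_char_two (F := F)).mp h
    omega
  have hn : (Fintype.card F / 2) % 2 = 1 := by omega
  -- key identity : χ(λ) = τ(λ)² λ in F
  have key : ∀ lam : Fˣ, ((χ lam : Fˣ) : F) = ((τ lam : Fˣ) : F) ^ 2 * (lam : F) := by
    intro lam
    by_cases hs : IsSquare lam
    · have h2 : ((τ lam : Fˣ) : F) ^ 2 * (lam : F) = 1 := by
        rw [← Units.val_pow_eq_pow_val, ← Units.val_mul, hτsq lam hs, Units.val_one]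
      rw [hχsq lam hs, h2, Units.val_one]
    · -- λ is a nonsquare, so -λ is a square
      have hlpow : lam ^ (Fintype.card F / 2) = -1 := by
        rcases FiniteField.pow_dichotomy hchar (Units.ne_zero lam) with h | h
        · exact absurd ((FiniteField.unit_isSquare_iff hchar lam).mpr
            (Units.ext (by push_cast; exact h))) hs
        · exact Units.ext (by push_cast; exact h)
      have hneg : ((-1 : Fˣ)) ^ (Fintype.card F / 2) = -1 :=
        Odd.neg_one_pow (Nat.odd_iff.mpr hn)
      have hmsq : IsSquare (-lam) := by
        rw [FiniteField.unit_isSquare_iff hchar, show (-lam) = (-1) * lam from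
          (neg_one_mul lam).symm, mul_pow, hlpow, hneg]
        simp
      have hτm : τ lam = τ (-lam) := by
        have h' : τ ((-1) * (-lam)) = τ (-lam) := by rw [map_mul, hτ1, one_mul]
        rw [← h', neg_one_mul, neg_neg]
      have h2 : (τ (-lam)) ^ 2 * (-lam) = 1 := hτsq _ hmsq
      have h3 : (τ lam) ^ 2 * lam = -1 := by
        rw [hτm, show (τ (-lam)) ^ 2 * lam = -((τ (-lam)) ^ 2 * (-lam)) from by
          rw [mul_neg, neg_neg], h2]
      rw [hχns lam hs]
      have := congrArg Units.val h3
      push_cast at this ⊢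
      rw [this]
  intro g g' lam lam' hg _hg'
  refine ⟨?_, ?_, ?_, ?_⟩
  · -- automorphism
    intro p q
    rw [hmul, hA, hA, hA, hmul]
    have hω : ω (((τ lam : Fˣ) : F) • g p.1) (((τ lam : Fˣ) : F) • g q.1)
        = ((χ lam : Fˣ) : F) * ω p.1 q.1 := by
      simp only [map_smul, LinearMap.smul_apply, smul_eq_mul, hg, key lam]
      ring
    refine Prod.ext ?_ ?_
    · simp [map_add, smul_add]
    · simp only [hω]
      ring
  · -- bijectivity
    set c : F := ((τ lam : Fˣ) : F) with hc
    set d : F := ((χ lam : Fˣ) : F) with hd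
    have hc0 : c ≠ 0 := Units.ne_zero _
    have hd0 : d ≠ 0 := Units.ne_zero _
    refine Function.bijective_iff_has_inverse.mpr
      ⟨fun p => (c⁻¹ • g.symm p.1, d⁻¹ * p.2), ?_, ?_⟩
    · intro p
      rw [hA]
      refine Prod.ext ?_ ?_
      · simp only [map_smul, LinearEquiv.symm_apply_apply, smul_smul, ← hc,
          inv_mul_cancel₀ hc0, one_smul]
      · simp only [← mul_assoc, ← hd, inv_mul_cancel₀ hd0, one_mul]
    · intro p
      rw [hA]
      refine Prod.ext ?_ ?_
      · simp only [map_smul, LinearEquiv.apply_symm_apply, smul_smul, ← hc,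
          mul_inv_cancel₀ hc0, one_smul]
      · simp only [← mul_assoc, ← hd, mul_inv_cancel₀ hd0, one_mul]
  · -- composition
    intro p
    rw [hA, hA, hA]
    refine Prod.ext ?_ ?_
    · simp only [LinearEquiv.trans_apply, map_mul, map_smul, Units.val_mul, smul_smul]
      ring_nf
    · simp only [map_mul, Units.val_mul]
      ring
  · -- identity
    intro p
    rw [hA]
    simp
end

section
/- Let $K$ be a field of characteristic $0$ and $\mathscr{W} = \mathcal{X}\oplus\mathcal{X}^*$ a polarized symplectic $K$-space with $B$ as above. The map $\alpha : \mathrm{Sp}(\mathscr{W}) \to \mathrm{Ps}(\mathscr{W})$, $g \mapsto (g, q_g)$ with $q_g(x+x^*) = \tfrac{1}{2}B(xa, xb) + \tfrac{1}{2}B(x^*c, x^*d) + B(x^*c, xb)$ for $g = \begin{pmatrix} a & b \\ c & d\end{pmatrix}$ (block decomposition relative to $\mathcal{X}\oplus\mathcal{X}^*$), is a group homomorphism splitting the exact sequence $1 \to \mathscr{W}^\vee \to \mathrm{Ps}(\mathscr{W}) \to \mathrm{Sp}(\mathscr{W}) \to 1$, where $\mathscr{W}^\vee = \mathrm{Hom}_{\mathrm{group}}(\mathscr{W},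 K)$. -/
/-- Let `K` be a field of characteristic 0 and `𝒲 = 𝒳 ⊕ 𝒳*` a polarized
symplectic `K`-space (polarization given by the projection `p` onto `𝒳` along `𝒳*`),
with `B(w,w') = ω(p w, w' - p w')`.  The map `α : g ↦ (g, q_g)` with
`q_g(x + x*) = ½ B(xa, xb) + ½ B(x*c, x*d) + B(x*c, xb)` (block decomposition
`xa = p(g(p w))`, `xb = g(p w) - p(g(p w))`, `x*c = p(g(w - p w))`,
`x*d = g(w - p w) - p(g(w - p w))`) is a group homomorphism `Sp(𝒲) → Ps(𝒲)`
splitting `1 → 𝒲^∨ → Ps(𝒲) → Sp(𝒲) → 1`: each `q_g` lies in `Σ_g`, and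
`q_{gg'} = q_g + q_{g'} ∘ g`. -/
theorem stmt13 (K : Type*) [Field K] [CharZero K]
    (𝒲 : Type*) [AddCommGroup 𝒲] [Module K 𝒲]
    (ω : 𝒲 →ₗ[K] 𝒲 →ₗ[K] K) (halt : ∀ w : 𝒲, ω w w = 0)
    (p : 𝒲 →ₗ[K] 𝒲) (hp : p ∘ₗ p = p)
    (hX : ∀ u v : 𝒲, ω (p u) (p v) = 0)
    (hXstar : ∀ u v : 𝒲, ω (u - p u) (v - p v) = 0)
    (B : 𝒲 → 𝒲 → K) (hB : ∀ w w' : 𝒲, B w w' = ω (p w) (w' - p w'))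
    (Q : (𝒲 →ₗ[K] 𝒲) → 𝒲 → K)
    (hQ : ∀ (g : 𝒲 →ₗ[K] 𝒲) (w : 𝒲),
      Q g w = (2 : K)⁻¹ * ω (p (g (p w))) (g (p w) - p (g (p w)))
            + (2 : K)⁻¹ * ω (p (g (w - p w))) (g (w - p w) - p (g (w - p w)))
            + ω (p (g (w - p w))) (g (p w) - p (g (p w)))) :
    ∀ g g' : 𝒲 →ₗ[K] 𝒲,
      (∀ v w : 𝒲, ω (g v) (g w) = ω v w) → Function.Bijective g →
      (∀ v w : 𝒲, ω (g' v) (g' w) = ω v w) → Function.Bijective g' →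
      -- q_g ∈ Σ_g
      (∀ w w' : 𝒲, Q g (w + w') - Q g w - Q g w' = B (g w) (g w') - B w w') ∧
      -- the section is multiplicative: q_{g g'} = q_g + q_{g'} ∘ g
      (∀ w : 𝒲, Q (g'.comp g) w = Q g w + Q g' (g w)) := by

  intro g g' hg hgb hg' hg'b
  have skew : ∀ u v : 𝒲, ω u v = - ω v u := by
    intro u v
    have h := halt (u + v)
    simp only [map_add, LinearMap.add_apply, halt] at h
    linear_combination h
  have key : ∀ (h : 𝒲 →ₗ[K] 𝒲), (∀ v w : 𝒲, ω (h v) (h w) = ω v w) →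
      ∀ u v : 𝒲, ω u v = ω (p (h u)) (h v) - ω (p (h v)) (h u) := by
    intro h hh u v
    have h1 := hh u v
    have h2 := hXstar (h u) (h v)
    have h3 := hX (h u) (h v)
    have h5 := skew (h u) (p (h v))
    simp only [map_sub, LinearMap.sub_apply] at h2
    linear_combination -h1 + h2 - h3 + h5
  have hQ' : ∀ (h : 𝒲 →ₗ[K] 𝒲) (w : 𝒲), Q h w =
      (2 : K)⁻¹ * ω (p (h (p w))) (h (p w))
      + (2 : K)⁻¹ * ω (p (h (w - p w))) (h (w - p w))
      + ω (p (h (w - p w))) (h (p w)) := by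
    intro h w
    rw [hQ]
    have z1 := hX (h (p w)) (h (p w))
    have z2 := hX (h (w - p w)) (h (w - p w))
    have z3 := hX (h (w - p w)) (h (p w))
    have z4 := hX (h w) (h w)
    have z5 := hX (h (p w)) (h w)
    have z6 := hX (h w) (h (p w))
    simp only [map_sub, LinearMap.sub_apply] at *
    linear_combination (2:K)⁻¹ * z1 + (2:K)⁻¹ * z2 + z3 - z4 + z5 - z6
  constructor
  · intro w w'
    rw [hQ' g (w + w'), hQ' g w, hQ' g w', hB, hB]
    have hpww : p (w + w') = p w + p w' := map_add p w w'
    have hbww : w + w' - p (w + w') = (w - p w) + (w' - p w') := by rw [hpww]; abel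
    rw [hbww, hpww]
    have hgw : g w = g (p w) + g (w - p w) := by
      rw [← map_add]; exact congrArg g (by abel)
    have hgw' : g w' = g (p w') + g (w' - p w') := by
      rw [← map_add]; exact congrArg g (by abel)
    rw [hgw, hgw']
    set b := w - p w with hb
    set a := p w with ha
    set b' := w' - p w' with hb'
    set a' := p w' with ha'
    have z1 : ω a a' = 0 := by rw [ha, ha']; exact hX w w'
    have z2 : ω b b' = 0 := by rw [hb, hb']; exact hXstar w w'
    simp only [map_add, map_sub, LinearMap.add_apply, LinearMap.sub_apply, hX]
    linear_combination (2:K)⁻¹ * key g hg a a' - (2:K)⁻¹ * z1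
      + (2:K)⁻¹ * key g hg b b' - (2:K)⁻¹ * z2 + key g hg a b'
  · intro w
    rw [hQ' (g'.comp g) w, hQ' g w, hQ' g' (g w)]
    simp only [LinearMap.comp_apply]
    have hgw : g w = g (p w) + g (w - p w) := by
      rw [← map_add]; exact congrArg g (by abel)
    rw [hgw]
    have hp2 : p (g (p w) + g (w - p w)) = p (g (p w)) + p (g (w - p w)) :=
      map_add p _ _
    have hb2 : g (p w) + g (w - p w) - p (g (p w) + g (w - p w))
        = (g (p w) - p (g (p w))) + (g (w - p w) - p (g (w - p w))) := by
      rw [hp2]; abel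
    rw [hb2, hp2]
    set e1 := p (g (p w)) with he1
    set e2 := p (g (w - p w)) with he2
    set e3 := g (p w) - e1 with he3
    set e4 := g (w - p w) - e2 with he4
    have z11 : ω e1 e1 = 0 := by rw [he1]; exact hX _ _
    have z22 : ω e2 e2 = 0 := by rw [he2]; exact hX _ _
    have z21 : ω e2 e1 = 0 := by rw [he1, he2]; exact hX _ _
    have z43 : ω e4 e3 = 0 := by
      rw [he4, he3, he1, he2]; exact hXstar (g (w - p w)) (g (p w))
    have hga : g (p w) = e1 + e3 := by rw [he3]; abel
    have hgb : g (w - p w) = e2 + e4 := by rw [he4]; abel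
    rw [hga, hgb]
    simp only [map_add, LinearMap.add_apply]
    linear_combination (-(2:K)⁻¹) * key g' hg' e1 e3 - (2:K)⁻¹ * key g' hg' e2 e4
      - (2:K)⁻¹ * key g' hg' e2 e1 - (2:K)⁻¹ * key g' hg' e4 e3 - key g' hg' e2 e3
      - (2:K)⁻¹ * z21 + (2:K)⁻¹ * z43 - (2:K)⁻¹ * z11 - (2:K)⁻¹ * z22
end
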